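/- Every subfield of a CM-field is either totally real or itself a CM-field. -/

import Mathlib

open NumberField

/-- A field is totally real if every complex embedding is real. -/
def IsTotallyRealField (K : Type*) [Field K] : Prop :=
  ∀ φ : K →+* ℂ, ComplexEmbedding.IsReal φ

/-- A field is totally imaginary if no complex embedding is real. -/
def IsTotallyImaginaryField (K : Type*) [Field K] : Prop :=
  ∀ φ : K →+* ℂ, ¬ ComplexEmbedding.IsReal φ

/-- A CM-field: a totally imaginary field which is a quadratic extension of a
totally real subfield. -/
def IsCMField (L : Type*) [Field L] : Prop :=
  IsTotallyImaginaryField L ∧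
    ∃ F : Subfield L, IsTotallyRealField F ∧ Module.finrank F L = 2

set_option synthInstance.maxHeartbeats 400000
set_option maxHeartbeats 1000000

section Aux

open Module Polynomial
open scoped ComplexConjugate

private theorem aux_tower (L : Type*) [Field L] (K : Subfield L) : IsScalarTower ℚ K L :=
  ⟨fun q a l => by
    show ((q • a : K) : L) • l = q • ((a : L) • l)
    show ((q • (a : L)) • l) = _
    rw [smul_eq_mul, smul_eq_mul, smul_mul_assoc]⟩

private theorem aux_nf (L : Type*) [Field L] [NumberField L] (K : Subfield L) :
    NumberField K := by
  have : FiniteDimensional ℚ K :=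
    FiniteDimensional.of_injective ((K.subtype).toRatAlgHom.toLinearMap) Subtype.coe_injective
  exact { to_charZero := inferInstance, to_finiteDimensional := this }

private theorem aux_fd (L : Type*) [Field L] [NumberField L] (K : Subfield L) :
    FiniteDimensional K L := by
  have := aux_tower L K; have := aux_nf L K
  exact FiniteDimensional.right ℚ K L

/-- Any embedding of a subfield extends to the whole number field. -/
private theorem aux_ext (M : Type*) [Field M] [NumberField M] (E : Subfield M) (φ : E →+* ℂ) :
    ∃ Φ : M →+* ℂ, ∀ x : E, Φ x = φ x := by
  letI : Algebra E ℂ := φ.toAlgebra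
  haveI : Algebra.IsAlgebraic E M := by
    have := aux_nf M E; have := aux_tower M E
    exact Algebra.IsAlgebraic.tower_top (K := ℚ) E
  refine ⟨(IsAlgClosed.lift (R := E) (S := M) (M := ℂ)).toRingHom, fun x => ?_⟩
  have h1 : (x : M) = algebraMap E M x := rfl
  rw [AlgHom.toRingHom_eq_coe, RingHom.coe_coe, h1, AlgHom.commutes]
  rfl

/-- If `y ∉ K` then two embeddings of `L` agree on `K` but differ at `y`. -/
private theorem aux_two_emb (L : Type*) [Field L] [NumberField L] (K : Subfield L) {y : L}
    (hy : y ∉ K) : ∃ Φ₁ Φ₂ : L →+* ℂ, (∀ x : K, Φ₁ x = Φ₂ x) ∧ Φ₁ y ≠ Φ₂ y := by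
  haveI := aux_fd L K
  haveI := aux_nf L K
  obtain ⟨Φ₀⟩ : Nonempty (L →+* ℂ) := inferInstance
  letI : Algebra K ℂ := (Φ₀.comp K.subtype).toAlgebra
  have hint : IsIntegral K y := IsIntegral.of_finite K y
  have hd : 2 ≤ (minpoly K y).natDegree := by
    rw [minpoly.two_le_natDegree_iff hint]
    rintro ⟨x, rfl⟩
    exact hy x.2
  have hsep : (minpoly K y).Separable := Algebra.IsSeparable.isSeparable K y
  have hsplit : ∀ s : L, IsIntegral K s ∧ ((minpoly K s).map (algebraMap K ℂ)).Splits :=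
    fun s => ⟨IsIntegral.of_finite K s, IsAlgClosed.splits _⟩
  have hcard : 2 ≤ Fintype.card ((minpoly K y).rootSet ℂ) := by
    rw [card_rootSet_eq_natDegree hsep (IsAlgClosed.splits _)]
    exact hd
  obtain ⟨⟨z₁, hz₁⟩, ⟨z₂, hz₂⟩, hne⟩ :=
    (Fintype.one_lt_card_iff_nontrivial.mp hcard).exists_pair_ne
  obtain ⟨f₁, hf₁⟩ := IntermediateField.exists_algHom_of_splits_of_aeval (F := K) (E := L)
    (K := ℂ) hsplit ((mem_rootSet.mp hz₁).2)
  obtain ⟨f₂, hf₂⟩ := IntermediateField.exists_algHom_of_splits_of_aeval (F := K) (E := L)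
    (K := ℂ) hsplit ((mem_rootSet.mp hz₂).2)
  refine ⟨f₁.toRingHom, f₂.toRingHom, fun x => ?_, ?_⟩
  · have h1 : (x : L) = algebraMap K L x := rfl
    simp only [AlgHom.toRingHom_eq_coe, RingHom.coe_coe, h1, AlgHom.commutes]
  · simpa [hf₁, hf₂] using fun h => hne (Subtype.ext h)

private theorem aux_normal (L : Type*) [Field L] [NumberField L] (F : Subfield L)
    (hrank : Module.finrank F L = 2) : Normal F L := by
  haveI := aux_fd L F
  rw [normal_iff]
  intro x
  have hint : IsIntegral F x := IsIntegral.of_finite F x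
  refine ⟨hint, ?_⟩
  set p' := (minpoly F x).map (algebraMap F L) with hp'
  have hp'0 : p' ≠ 0 := Polynomial.map_ne_zero (minpoly.ne_zero hint)
  have hroot : IsRoot p' x := by
    rw [IsRoot, hp', eval_map, ← aeval_def, minpoly.aeval]
  obtain ⟨q, hq⟩ := (dvd_iff_isRoot.mpr hroot)
  have hq0 : q ≠ 0 := by rintro rfl; rw [mul_zero] at hq; exact hp'0 hq
  have hdeg : q.natDegree ≤ 1 := by
    have h1 : p'.natDegree ≤ 2 := by
      rw [hp', natDegree_map]
      exact hrank ▸ minpoly.natDegree_le x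
    have := natDegree_mul (X_sub_C_ne_zero x) hq0
    rw [← hq, natDegree_X_sub_C] at this
    omega
  rw [hq]
  exact Splits.mul (Splits.X_sub_C _) (Splits.of_natDegree_le_one hdeg)

private theorem aux_two_lem {G : Type*} [Group G] [Fintype G] (h : Fintype.card G = 2) {a b : G}
    (ha : a ≠ 1) (hb : b ≠ 1) : a = b := by
  classical
  by_contra hab
  have h3 : ({1, a, b} : Finset G).card = 3 := by
    rw [Finset.card_insert_of_notMem (by simp [Ne.symm ha, Ne.symm hb]),
      Finset.card_insert_of_notMem (by simp [hab]), Finset.card_singleton]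
  have := Finset.card_le_univ ({1, a, b} : Finset G)
  rw [h3, h] at this
  omega

/-- Existence of the canonical complex conjugation on a CM-field. -/
private theorem aux_conj_exists (L : Type*) [Field L] [NumberField L] (F : Subfield L)
    (hF : IsTotallyRealField F) (hrank : Module.finrank F L = 2)
    (hIm : IsTotallyImaginaryField L) :
    ∃ c : L ≃ₐ[F] L, c ≠ 1 ∧ (∀ x, c (c x) = x) ∧
      ∀ φ : L →+* ℂ, ∀ x, φ (c x) = conj (φ x) := by
  haveI := aux_fd L F
  haveI : IsGalois F L := { to_normal := aux_normal L F hrank }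
  have hcard : Fintype.card (L ≃ₐ[F] L) = 2 := by
    rw [← Nat.card_eq_fintype_card, IsGalois.card_aut_eq_finrank, hrank]
  have key : ∀ φ : L →+* ℂ, ∃ σ : L ≃ₐ[F] L, σ ≠ 1 ∧ ∀ x, φ (σ x) = conj (φ x) := by
    intro φ
    letI : Algebra L ℂ := φ.toAlgebra
    letI : Algebra F ℂ := (φ.comp F.subtype).toAlgebra
    haveI : @IsScalarTower F L ℂ Algebra.toSMul Algebra.toSMul Algebra.toSMul :=
      IsScalarTower.of_algebraMap_eq' rfl
    have hcomm : ∀ x : F, (starRingEnd ℂ).comp φ ((algebraMap F L) x) = algebraMap F ℂ x := by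
      intro x
      have := RingHom.congr_fun (hF (φ.comp F.subtype)) x
      simp [ComplexEmbedding.conjugate_coe_eq] at this
      exact this
    let ψ : L →ₐ[F] ℂ := { toRingHom := (starRingEnd ℂ).comp φ, commutes' := hcomm }
    refine ⟨ψ.restrictNormal' L, ?_, ?_⟩
    · intro h1
      apply hIm φ
      rw [ComplexEmbedding.isReal_iff]
      ext x
      have := AlgHom.restrictNormal_commutes ψ L x
      rw [show ψ.restrictNormal L x = (ψ.restrictNormal' L) x from rfl, h1] at this
      rw [ComplexEmbedding.conjugate_coe_eq]
      exact this.symm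
    · intro x
      have := AlgHom.restrictNormal_commutes ψ L x
      exact this.symm ▸ rfl
  obtain ⟨φ₀⟩ : Nonempty (L →+* ℂ) := inferInstance
  obtain ⟨c, hc1, hc⟩ := key φ₀
  have huniq : ∀ φ : L →+* ℂ, ∀ x, φ (c x) = conj (φ x) := by
    intro φ
    obtain ⟨σ, hσ1, hσ⟩ := key φ
    rwa [aux_two_lem hcard hc1 hσ1]
  have hsq : ∀ x, c (c x) = x := by
    have hcc : c * c = 1 := by
      by_contra hcc
      exact hc1 (by have := aux_two_lem hcard hcc hc1; rwa [← right_eq_mul (a := c), eq_comm])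
    intro x
    have := AlgEquiv.ext_iff.mp hcc x
    simpa using this
  exact ⟨c, hc1, hsq, huniq⟩

end Aux

/-- Every subfield of a CM-field is either totally real or itself a CM-field. -/
theorem subfield_totallyReal_or_isCMField (L : Type*) [Field L] [NumberField L]
    (h : _root_.IsCMField L) (K : Subfield L) :
    IsTotallyRealField K ∨ _root_.IsCMField K := by
  classical
  obtain ⟨hIm, F, hF, hrank⟩ := h
  obtain ⟨c, hc1, hc2, hc⟩ := aux_conj_exists L F hF hrank hIm
  haveI := aux_nf L K
  -- K is stable under c
  have hstab : ∀ x ∈ K, c x ∈ K := by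
    intro x hx
    by_contra hy
    obtain ⟨Φ₁, Φ₂, hagree, hne⟩ := aux_two_emb L K hy
    apply hne
    rw [hc Φ₁ x, hc Φ₂ x]
    congr 1
    exact hagree ⟨x, hx⟩
  -- conjugation as a ring equivalence of K
  let e : K ≃+* K :=
    { toFun := fun x => ⟨c x, hstab x x.2⟩
      invFun := fun x => ⟨c x, hstab x x.2⟩
      left_inv := fun x => Subtype.ext (hc2 x)
      right_inv := fun x => Subtype.ext (hc2 x)
      map_add' := fun x y => Subtype.ext (map_add c (x : L) (y : L))
      map_mul' := fun x y => Subtype.ext (map_mul c (x : L) (y : L)) }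
  have he : ∀ ψ : K →+* ℂ, ∀ x : K, ψ (e x) = (starRingEnd ℂ) (ψ x) := by
    intro ψ x
    obtain ⟨Φ, hΦ⟩ := aux_ext L K ψ
    have h1 : ψ (e x) = Φ ((e x : K) : L) := (hΦ (e x)).symm
    rw [h1]
    show Φ (c (x : L)) = _
    rw [hc Φ x, hΦ x]
  by_cases hid : ∀ x : K, e x = x
  · -- K is totally real
    left
    intro ψ
    rw [ComplexEmbedding.isReal_iff]
    ext x
    rw [ComplexEmbedding.conjugate_coe_eq, ← he ψ x, hid x]
  · right
    constructor
    · -- totally imaginary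
      intro ψ hψ
      apply hid
      intro x
      apply ψ.injective
      rw [he ψ x]
      exact RingHom.congr_fun hψ x
    · -- the totally real subfield: fixed field of e
      haveI : FiniteDimensional ℚ K := NumberField.to_finiteDimensional
      -- e as a ℚ-algebra equivalence
      let ce : K ≃ₐ[ℚ] K := AlgEquiv.ofRingEquiv (f := e) (fun q => by
        rw [eq_ratCast (algebraMap ℚ K) q, map_ratCast e])
      have hce2 : ce * ce = 1 := by
        ext x
        show c (c (x : L)) = (x : L)
        exact hc2 (x : L)
      have hce1 : ce ≠ 1 := by
        intro h1
        apply hid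
        intro x
        have := AlgEquiv.ext_iff.mp h1 x
        exact this
      have horder : orderOf ce = 2 := orderOf_eq_prime (by rw [← pow_two] at hce2; exact hce2) hce1
      let H : Subgroup (K ≃ₐ[ℚ] K) := Subgroup.zpowers ce
      have hcardH : Fintype.card H = 2 := by
        rw [Fintype.card_zpowers, horder]
      have hfr : Module.finrank (IntermediateField.fixedField H) K = 2 := by
        rw [IntermediateField.finrank_fixedField_eq_card, Nat.card_eq_fintype_card, hcardH]
      refine ⟨(IntermediateField.fixedField H).toSubfield, ?_, ?_⟩
      · -- totally real
        intro χ
        obtain ⟨ψ, hψ⟩ := aux_ext K (IntermediateField.fixedField H).toSubfield χ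
        rw [ComplexEmbedding.isReal_iff]
        ext x
        rw [ComplexEmbedding.conjugate_coe_eq, ← hψ x, ← he ψ]
        have hfix : e (x : K) = (x : K) := by
          have hxmem : (x : K) ∈ IntermediateField.fixedField H := x.2
          have := hxmem ⟨ce, Subgroup.mem_zpowers ce⟩
          exact this
        rw [hfix, hψ x]
      · exact hfr
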